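/- Shifted symmetrization in expectation: let G be a class of measurable functions on a probability space, Z_1,...,Z_n i.i.d. samples with empirical mean P_n and population mean P, and c ≥ 0. Then E[sup_{g∈G} (P g − (1+c) P_n g)] ≤ ((c+2)/n) · E E_ε [sup_{g∈G} Σ_{i=1}^n (ε_i g(Z_i) − (c/(c+2)) g(Z_i))], where ε_i are independent Rademacher random variables independent of the sample. -/

import Mathlib

open MeasureTheory Finset

section aux

variable {α β : Type*} [MeasurableSpace α] {m : Measure α}

lemma aux_integrable_sup' (f : β → α → ℝ) (G : Finset β) (hG : G.Nonempty)
    (h : ∀ b ∈ G, Integrable (f b) m) :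
    Integrable (fun x => G.sup' hG fun b => f b x) m := by
  revert h
  induction hG using Finset.Nonempty.cons_induction with
  | singleton b =>
    intro h
    simp only [Finset.sup'_singleton]
    exact h b (by simp)
  | cons b s hbs hs ih =>
    intro h
    simp only [Finset.sup'_cons hs]
    exact (h b (Finset.mem_cons_self b s)).sup
      (ih fun x hx => h x (Finset.mem_cons_of_mem hx))

lemma aux_measurable_sup' (f : β → α → ℝ) (G : Finset β) (hG : G.Nonempty)
    (h : ∀ b ∈ G, Measurable (f b)) :
    Measurable (fun x => G.sup' hG fun b => f b x) := by
  revert h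
  induction hG using Finset.Nonempty.cons_induction with
  | singleton b =>
    intro h
    simp only [Finset.sup'_singleton]
    exact h b (by simp)
  | cons b s hbs hs ih =>
    intro h
    simp only [Finset.sup'_cons hs]
    exact (h b (Finset.mem_cons_self b s)).sup
      (ih fun x hx => h x (Finset.mem_cons_of_mem hx))

lemma aux_sup'_integral_le (f : β → α → ℝ) (G : Finset β) (hG : G.Nonempty)
    (h : ∀ b ∈ G, Integrable (f b) m) :
    (G.sup' hG fun b => ∫ x, f b x ∂m) ≤ ∫ x, G.sup' hG (fun b => f b x) ∂m :=
  Finset.sup'_le _ _ fun b hb =>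
    integral_mono (h b hb) (aux_integrable_sup' f G hG h)
      fun x => Finset.le_sup' (fun b => f b x) hb

lemma aux_mul_sup' {k : ℝ} (hk : 0 ≤ k) (G : Finset β) (hG : G.Nonempty) (f : β → ℝ) :
    k * G.sup' hG f = G.sup' hG fun b => k * f b := by
  rw [Finset.comp_sup'_eq_sup'_comp hG (fun x : ℝ => k * x)
    (fun x y => by simpa using mul_max_of_nonneg x y hk)]
  rfl

lemma aux_sup'_add_le (G : Finset β) (hG : G.Nonempty) (f h : β → ℝ) :
    (G.sup' hG fun b => f b + h b) ≤ G.sup' hG f + G.sup' hG h :=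
  Finset.sup'_le _ _ fun b hb =>
    add_le_add (Finset.le_sup' f hb) (Finset.le_sup' h hb)

lemma aux_int_comp {δ : Type*} [MeasurableSpace δ] {ν : Measure δ} {f : α → δ} {g : δ → ℝ}
    (hf : MeasurePreserving f m ν) (hg : Integrable g ν) :
    Integrable (fun x => g (f x)) m :=
  (hf.integrable_comp hg.aestronglyMeasurable).mpr hg

lemma aux_measurePreserving_eval {ι : Type*} [Fintype ι] {α : ι → Type*}
    [∀ i, MeasurableSpace (α i)] (μ : ∀ i, Measure (α i)) [∀ i, IsProbabilityMeasure (μ i)]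
    (i : ι) : MeasurePreserving (Function.eval i) (Measure.pi μ) (μ i) := by
  classical
  refine ⟨measurable_pi_apply i, ?_⟩
  ext s hs
  rw [Measure.map_apply (measurable_pi_apply i) hs, Set.eval_preimage, Measure.pi_pi]
  rw [Finset.prod_eq_single i (fun j _ hj => by simp [Function.update_of_ne hj]) (by simp)]
  simp

lemma aux_mp_fst {γ : Type*} [MeasurableSpace γ] (μ : Measure α) (ν : Measure γ)
    [SFinite μ] [IsProbabilityMeasure ν] :
    MeasurePreserving Prod.fst (μ.prod ν) μ :=
  ⟨measurable_fst, by simp⟩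

lemma aux_mp_snd {γ : Type*} [MeasurableSpace γ] (μ : Measure α) (ν : Measure γ)
    [IsProbabilityMeasure μ] [SFinite ν] :
    MeasurePreserving Prod.snd (μ.prod ν) ν :=
  ⟨measurable_snd, by simp⟩

end aux

set_option maxHeartbeats 1600000

/-- Shifted symmetrization in expectation: for a class `G` of integrable functions, an i.i.d.
sample of size `n` (modeled by the product measure), and `c ≥ 0`,
`E sup_g (P g - (1+c) Pₙ g) ≤ ((c+2)/n) E E_ε sup_g Σᵢ (εᵢ g(Zᵢ) - (c/(c+2)) g(Zᵢ))`,
where the Rademacher expectation `E_ε` is the average over all sign patterns. -/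
theorem shifted_symmetrization_expectation {𝒵 : Type*} [MeasurableSpace 𝒵]
    (μ : Measure 𝒵) [IsProbabilityMeasure μ]
    (n : ℕ) (hn : 0 < n) (G : Finset (𝒵 → ℝ)) (hG : G.Nonempty)
    (hmeas : ∀ g ∈ G, Measurable g) (hInt : ∀ g ∈ G, Integrable g μ)
    (c : ℝ) (hc : 0 ≤ c) :
    ∫ z, (G.sup' hG fun g => (∫ x, g x ∂μ) - (1 + c) * ((n : ℝ)⁻¹ * ∑ i, g (z i)))
        ∂(Measure.pi fun _ : Fin n => μ) ≤
      ((c + 2) / n) *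
        ∫ z, ((2 ^ n : ℝ)⁻¹ * ∑ σ : Fin n → Bool, G.sup' hG fun g =>
            ∑ i, ((if σ i then (1 : ℝ) else -1) * g (z i) - (c / (c + 2)) * g (z i)))
          ∂(Measure.pi fun _ : Fin n => μ) := by
  classical
  have hc2 : (0:ℝ) < c + 2 := by linarith
  have hn' : (n:ℝ) ≠ 0 := Nat.cast_ne_zero.mpr hn.ne'
  set a : ℝ := c / (c + 2) with hadef
  have ha0 : 0 ≤ a := div_nonneg hc hc2.le
  set ν : Measure (Fin n → 𝒵) := Measure.pi fun _ : Fin n => μ with hνdef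
  set π : Measure (Fin n → 𝒵 × 𝒵) := Measure.pi fun _ : Fin n => μ.prod μ with hπdef
  -- basic integrability / measurability
  have hIntEval : ∀ g ∈ G, ∀ i : Fin n, Integrable (fun z : Fin n → 𝒵 => g (z i)) ν :=
    fun g hg i => aux_int_comp (aux_measurePreserving_eval _ i) (hInt g hg)
  have hMeasEval : ∀ g ∈ G, ∀ i : Fin n, Measurable fun z : Fin n → 𝒵 => g (z i) :=
    fun g hg i => (hmeas g hg).comp (measurable_pi_apply i)
  have mpfst : MeasurePreserving (fun w : Fin n → 𝒵 × 𝒵 => fun i => (w i).1) π ν :=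
    measurePreserving_pi _ _ fun _ => aux_mp_fst μ μ
  have mpsnd : MeasurePreserving (fun w : Fin n → 𝒵 × 𝒵 => fun i => (w i).2) π ν :=
    measurePreserving_pi _ _ fun _ => aux_mp_snd μ μ
  have hIntX : ∀ g ∈ G, ∀ i : Fin n, Integrable (fun w : Fin n → 𝒵 × 𝒵 => g ((w i).1)) π :=
    fun g hg i => by have h := aux_int_comp mpfst (hIntEval g hg i); exact h
  have hIntY : ∀ g ∈ G, ∀ i : Fin n, Integrable (fun w : Fin n → 𝒵 × 𝒵 => g ((w i).2)) π :=
    fun g hg i => by have h := aux_int_comp mpsnd (hIntEval g hg i); exact h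
  -- main players
  set A : (Fin n → Bool) → (Fin n → 𝒵) → ℝ := fun σ z =>
    G.sup' hG fun g => ∑ i, ((if σ i then (1:ℝ) else -1) * g (z i) - a * g (z i)) with hAdef
  set B : (Fin n → Bool) → (Fin n → 𝒵) → ℝ := fun σ z =>
    G.sup' hG fun g => ∑ i, (-(if σ i then (1:ℝ) else -1) * g (z i) - a * g (z i)) with hBdef
  set H : (Fin n → Bool) → (Fin n → 𝒵 × 𝒵) → ℝ := fun σ w =>
    G.sup' hG fun g => ∑ i, ((if σ i then (1:ℝ) else -1) * (g ((w i).2) - g ((w i).1))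
      - a * (g ((w i).2) + g ((w i).1))) with hHdef
  set H1 : (Fin n → 𝒵 × 𝒵) → ℝ := fun w =>
    G.sup' hG fun g => ∑ i, ((g ((w i).2) - g ((w i).1))
      - a * (g ((w i).2) + g ((w i).1))) with hH1def
  have hIntA : ∀ σ, Integrable (A σ) ν := fun σ =>
    aux_integrable_sup' _ G hG fun g hg =>
      integrable_finset_sum _ fun i _ =>
        ((hIntEval g hg i).const_mul _).sub ((hIntEval g hg i).const_mul a)
  have hMeasA : ∀ σ, Measurable (A σ) := fun σ =>
    aux_measurable_sup' _ G hG fun g hg =>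
      Finset.measurable_sum _ fun i _ =>
        ((hMeasEval g hg i).const_mul _).sub ((hMeasEval g hg i).const_mul a)
  have hIntB : ∀ σ, Integrable (B σ) ν := fun σ =>
    aux_integrable_sup' _ G hG fun g hg =>
      integrable_finset_sum _ fun i _ =>
        ((hIntEval g hg i).const_mul _).sub ((hIntEval g hg i).const_mul a)
  have hMeasB : ∀ σ, Measurable (B σ) := fun σ =>
    aux_measurable_sup' _ G hG fun g hg =>
      Finset.measurable_sum _ fun i _ =>
        ((hMeasEval g hg i).const_mul _).sub ((hMeasEval g hg i).const_mul a)
  -- per-coordinate expectation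
  have hPg : ∀ g ∈ G, ∀ i : Fin n, ∫ z, g (z i) ∂ν = ∫ x, g x ∂μ := by
    intro g hg i
    have h := integral_map (μ := ν) (φ := fun z : Fin n → 𝒵 => z i)
      (measurable_pi_apply i).aemeasurable
      (f := g) ((hmeas g hg).aestronglyMeasurable)
    rw [(aux_measurePreserving_eval (fun _ : Fin n => μ) i).map_eq] at h
    exact h.symm
  -- Step A1 : Jensen with the ghost sample
  have stepA1 : ∀ z : Fin n → 𝒵,
      (G.sup' hG fun g => (∫ x, g x ∂μ) - (1 + c) * ((n : ℝ)⁻¹ * ∑ i, g (z i)))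
        ≤ ∫ z', (G.sup' hG fun g => (n:ℝ)⁻¹ * ∑ i, (g (z' i) - (1+c) * g (z i))) ∂ν := by
    intro z
    have hint : ∀ g ∈ G, Integrable (fun z' : Fin n → 𝒵 =>
        (n:ℝ)⁻¹ * ∑ i, (g (z' i) - (1+c) * g (z i))) ν := fun g hg =>
      (integrable_finset_sum _ fun i _ => (hIntEval g hg i).sub (integrable_const _)).const_mul _
    refine le_trans (le_of_eq ?_) (aux_sup'_integral_le _ G hG hint)
    refine Finset.sup'_congr hG rfl fun g hg => ?_
    have hterm : ∀ i : Fin n, ∫ z', (g (z' i) - (1+c) * g (z i)) ∂ν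
        = (∫ x, g x ∂μ) - (1+c) * g (z i) := by
      intro i
      rw [integral_sub (hIntEval g hg i) (integrable_const _), hPg g hg i, integral_const]
      simp
    rw [integral_const_mul, integral_finset_sum
        (f := fun (i : Fin n) (z' : Fin n → 𝒵) => g (z' i) - (1+c) * g (z i)) _
        (fun i _ => (hIntEval g hg i).sub (integrable_const _)),
      Finset.sum_congr rfl fun i _ => hterm i, Finset.sum_sub_distrib, ← Finset.mul_sum,
      Finset.sum_const, Finset.card_univ, Fintype.card_fin, nsmul_eq_mul]
    field_simp
  -- move to the paired product space
  set F : (Fin n → 𝒵) × (Fin n → 𝒵) → ℝ := fun p =>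
    G.sup' hG fun g => (n:ℝ)⁻¹ * ∑ i, (g (p.2 i) - (1+c) * g (p.1 i)) with hFdef
  have hIntF : Integrable F (ν.prod ν) :=
    aux_integrable_sup' _ G hG fun g hg =>
      (integrable_finset_sum
        (f := fun (i : Fin n) (p : (Fin n → 𝒵) × (Fin n → 𝒵)) =>
          g (p.2 i) - (1 + c) * g (p.1 i)) _ fun i _ =>
        (by have h := aux_int_comp (aux_mp_snd ν ν) (hIntEval g hg i); exact h :
            Integrable (fun p : (Fin n → 𝒵) × (Fin n → 𝒵) => g (p.2 i)) (ν.prod ν)).sub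
          ((by have h := aux_int_comp (aux_mp_fst ν ν) (hIntEval g hg i); exact h :
            Integrable (fun p : (Fin n → 𝒵) × (Fin n → 𝒵) => g (p.1 i)) (ν.prod ν)).const_mul
            (1 + c))).const_mul _
  have hIntLHS : Integrable (fun z : Fin n → 𝒵 =>
      G.sup' hG fun g => (∫ x, g x ∂μ) - (1 + c) * ((n : ℝ)⁻¹ * ∑ i, g (z i))) ν :=
    aux_integrable_sup' _ G hG fun g hg =>
      (integrable_const _).sub
        (((integrable_finset_sum _ fun i _ => hIntEval g hg i).const_mul _).const_mul _)
  have mpE : MeasurePreserving (MeasurableEquiv.arrowProdEquivProdArrow 𝒵 𝒵 (Fin n))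
      π (ν.prod ν) :=
    measurePreserving_arrowProdEquivProdArrow 𝒵 𝒵 (Fin n) (fun _ => μ) (fun _ => μ)
  have stepA :
      (∫ z, (G.sup' hG fun g => (∫ x, g x ∂μ) - (1 + c) * ((n : ℝ)⁻¹ * ∑ i, g (z i))) ∂ν)
        ≤ ∫ w, F (fun i => (w i).1, fun i => (w i).2) ∂π := by
    have h1 : (∫ z, (G.sup' hG fun g =>
          (∫ x, g x ∂μ) - (1 + c) * ((n : ℝ)⁻¹ * ∑ i, g (z i))) ∂ν)
        ≤ ∫ z, ∫ z', F (z, z') ∂ν ∂ν :=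
      integral_mono hIntLHS hIntF.integral_prod_left stepA1
    have h2 : ∫ z, ∫ z', F (z, z') ∂ν ∂ν = ∫ p, F p ∂(ν.prod ν) :=
      (integral_prod F hIntF).symm
    have h3 : ∫ p, F p ∂(ν.prod ν) = ∫ w, F (fun i => (w i).1, fun i => (w i).2) ∂π :=
      (mpE.integral_comp' F).symm
    exact h1.trans_eq (h2.trans h3)
  -- Step B : pointwise rescaling
  have hptB : ∀ w : Fin n → 𝒵 × 𝒵,
      F (fun i => (w i).1, fun i => (w i).2) = ((c+2)/(2*(n:ℝ))) * H1 w := by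
    intro w
    rw [hH1def, aux_mul_sup' (by positivity) G hG]
    refine Finset.sup'_congr hG rfl fun g hg => ?_
    rw [Finset.mul_sum, Finset.mul_sum]
    refine Finset.sum_congr rfl fun i _ => ?_
    rw [hadef]
    field_simp
    ring
  -- Step C : symmetrization via coordinatewise swaps
  have stepC : ∀ σ : Fin n → Bool, ∫ w, H1 w ∂π = ∫ w, H σ w ∂π := by
    intro σ
    have hTmeas : Measurable (fun w : Fin n → 𝒵 × 𝒵 => fun i =>
        if σ i then w i else (w i).swap) := by
      refine measurable_pi_iff.mpr fun i => ?_
      by_cases h : σ i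
      · simpa [h] using measurable_pi_apply i
      · convert (measurable_swap (α := 𝒵) (β := 𝒵)).comp
          (measurable_pi_apply (X := fun _ : Fin n => 𝒵 × 𝒵) i) using 1
        funext x; simp [h]
    let T : (Fin n → 𝒵 × 𝒵) ≃ᵐ (Fin n → 𝒵 × 𝒵) :=
      { toFun := fun w i => if σ i then w i else (w i).swap
        invFun := fun w i => if σ i then w i else (w i).swap
        left_inv := fun w => by funext i; by_cases h : σ i <;> simp [h]
        right_inv := fun w => by funext i; by_cases h : σ i <;> simp [h]
        measurable_toFun := hTmeas
        measurable_invFun := hTmeas }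
    have mpT : MeasurePreserving T π π := by
      rw [hπdef]
      exact measurePreserving_pi (f := fun (i : Fin n) (p : 𝒵 × 𝒵) => if σ i then p else p.swap)
        (fun _ : Fin n => μ.prod μ) (fun _ : Fin n => μ.prod μ)
        (fun i => by
          cases h : σ i
          · simpa [h] using Measure.measurePreserving_swap (μ := μ) (ν := μ)
          · convert MeasurePreserving.id (μ.prod μ) using 1
            funext p; simp [h])
    have hcomp := mpT.integral_comp' H1
    rw [← hcomp]
    refine integral_congr_ae (Filter.Eventually.of_forall fun w => ?_)
    rw [hH1def, hHdef]
    refine Finset.sup'_congr hG rfl fun g hg => Finset.sum_congr rfl fun i _ => ?_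
    show (g ((if σ i then w i else (w i).swap).2) - g ((if σ i then w i else (w i).swap).1))
        - a * (g ((if σ i then w i else (w i).swap).2) + g ((if σ i then w i else (w i).swap).1))
      = _
    by_cases h : σ i
    · simp only [if_pos h]
      ring
    · simp only [if_neg h, Prod.fst_swap, Prod.snd_swap]
      ring
  have card2n : (Finset.univ : Finset (Fin n → Bool)).card = 2 ^ n := by
    simp [Fintype.card_fun]
  have stepC' : ∫ w, H1 w ∂π = (2^n : ℝ)⁻¹ * ∑ σ : Fin n → Bool, ∫ w, H σ w ∂π := by
    have hsum : ∑ σ : Fin n → Bool, ∫ w, H σ w ∂π = (2^n : ℝ) * ∫ w, H1 w ∂π := by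
      rw [Finset.sum_congr rfl fun σ _ => (stepC σ).symm, Finset.sum_const, card2n,
        nsmul_eq_mul]
      push_cast
      ring
    rw [hsum, inv_mul_cancel_left₀ (by positivity)]
  -- Step D : splitting the supremum
  have stepD : ∀ σ : Fin n → Bool,
      ∫ w, H σ w ∂π ≤ (∫ z, A σ z ∂ν) + ∫ z, B σ z ∂ν := by
    intro σ
    have hIntH : Integrable (H σ) π :=
      aux_integrable_sup' _ G hG fun g hg =>
        integrable_finset_sum _ fun i _ =>
          (((hIntY g hg i).sub (hIntX g hg i)).const_mul _).sub
            (((hIntY g hg i).add (hIntX g hg i)).const_mul a)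
    have hA' : Integrable (fun w : Fin n → 𝒵 × 𝒵 => A σ (fun i => (w i).2)) π := by
      have h := aux_int_comp mpsnd (hIntA σ); exact h
    have hB' : Integrable (fun w : Fin n → 𝒵 × 𝒵 => B σ (fun i => (w i).1)) π := by
      have h := aux_int_comp mpfst (hIntB σ); exact h
    have hpt : ∀ w : Fin n → 𝒵 × 𝒵,
        H σ w ≤ A σ (fun i => (w i).2) + B σ (fun i => (w i).1) := by
      intro w
      have hEq : H σ w = G.sup' hG fun g =>
          (∑ i, ((if σ i then (1:ℝ) else -1) * g ((w i).2) - a * g ((w i).2)))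
          + (∑ i, (-(if σ i then (1:ℝ) else -1) * g ((w i).1) - a * g ((w i).1))) := by
        rw [hHdef]
        refine Finset.sup'_congr hG rfl fun g hg => ?_
        rw [← Finset.sum_add_distrib]
        exact Finset.sum_congr rfl fun i _ => by ring
      rw [hEq, hAdef, hBdef]
      exact aux_sup'_add_le G hG _ _
    have hAeq : ∫ w, A σ (fun i => (w i).2) ∂π = ∫ z, A σ z ∂ν := by
      rw [← mpsnd.map_eq]
      exact (integral_map mpsnd.measurable.aemeasurable
        (hMeasA σ).aestronglyMeasurable).symm
    have hBeq : ∫ w, B σ (fun i => (w i).1) ∂π = ∫ z, B σ z ∂ν := by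
      rw [← mpfst.map_eq]
      exact (integral_map mpfst.measurable.aemeasurable
        (hMeasB σ).aestronglyMeasurable).symm
    calc ∫ w, H σ w ∂π
        ≤ ∫ w, (A σ (fun i => (w i).2) + B σ (fun i => (w i).1)) ∂π :=
          integral_mono hIntH (hA'.add hB') hpt
      _ = (∫ z, A σ z ∂ν) + ∫ z, B σ z ∂ν := by rw [integral_add hA' hB', hAeq, hBeq]
  -- Step E : reindexing the signs
  have stepE : ∑ σ : Fin n → Bool, ∫ z, B σ z ∂ν = ∑ σ : Fin n → Bool, ∫ z, A σ z ∂ν := by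
    refine Fintype.sum_bijective (fun σ : Fin n → Bool => fun i => !(σ i))
      (Function.Involutive.bijective fun σ => by funext i; simp) _ _ fun σ => ?_
    refine integral_congr_ae (Filter.Eventually.of_forall fun z => ?_)
    rw [hAdef, hBdef]
    refine Finset.sup'_congr hG rfl fun g hg => Finset.sum_congr rfl fun i _ => ?_
    cases h : σ i <;> simp [h]
  -- Step F : the right-hand side
  have stepF : ∫ z, ((2^n : ℝ)⁻¹ * ∑ σ : Fin n → Bool, A σ z) ∂ν
      = (2^n : ℝ)⁻¹ * ∑ σ : Fin n → Bool, ∫ z, A σ z ∂ν := by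
    rw [integral_const_mul, integral_finset_sum _ fun σ _ => hIntA σ]
  -- assemble everything
  calc
    ∫ z, (G.sup' hG fun g => (∫ x, g x ∂μ) - (1 + c) * ((n : ℝ)⁻¹ * ∑ i, g (z i))) ∂ν
      ≤ ∫ w, F (fun i => (w i).1, fun i => (w i).2) ∂π := stepA
    _ = ((c+2)/(2*(n:ℝ))) * ∫ w, H1 w ∂π := by
        rw [integral_congr_ae (Filter.Eventually.of_forall hptB), integral_const_mul]
    _ = ((c+2)/(2*(n:ℝ))) * ((2^n : ℝ)⁻¹ * ∑ σ : Fin n → Bool, ∫ w, H σ w ∂π) := by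
        rw [stepC']
    _ ≤ ((c+2)/(2*(n:ℝ))) * ((2^n : ℝ)⁻¹ *
          ∑ σ : Fin n → Bool, ((∫ z, A σ z ∂ν) + ∫ z, B σ z ∂ν)) := by
        refine mul_le_mul_of_nonneg_left (mul_le_mul_of_nonneg_left
          (Finset.sum_le_sum fun σ _ => stepD σ) (by positivity)) (by positivity)
    _ = ((c+2)/(n:ℝ)) * ((2^n : ℝ)⁻¹ * ∑ σ : Fin n → Bool, ∫ z, A σ z ∂ν) := by
        rw [Finset.sum_add_distrib, stepE]
        field_simp
        ring
    _ = ((c + 2) / n) * ∫ z, ((2^n : ℝ)⁻¹ * ∑ σ : Fin n → Bool, A σ z) ∂ν := by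
        rw [stepF]
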